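/- For all x₁, x₂ > 0 with α₀ ≤ x₁/x₂ ≤ β₀*, the second partial derivative of the value function with the optimal barrier is nonpositive: ∂²G/∂x₁² (x₁, x₂; β₀*) ≤ 0. -/

import Mathlib

set_option maxHeartbeats 800000

open Real Set Filter

/-- The value function `G(x₁, x₂; β)` of the barrier strategy with barrier `β`
and ruin level `α₀`. -/
noncomputable def Gb (α₀ ζ₁ ζ₂ β x₁ x₂ : ℝ) : ℝ :=
  α₀ * x₂ * ((x₁ / (α₀ * x₂)) ^ ζ₁ - (x₁ / (α₀ * x₂)) ^ ζ₂) /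
    (ζ₁ * (β / α₀) ^ (ζ₁ - 1) - ζ₂ * (β / α₀) ^ (ζ₂ - 1))

private lemma rpow_div_hasDeriv {c : ℝ} (hc : 0 < c) (ζ : ℝ) {t : ℝ} (ht : 0 < t) :
    HasDerivAt (fun t : ℝ => (t / c) ^ ζ) (ζ * (t / c) ^ (ζ - 1) / c) t := by
  have h1 : HasDerivAt (fun t : ℝ => t / c) (1 / c) t := by
    simpa using (hasDerivAt_id t).div_const c
  have h2 := (Real.hasDerivAt_rpow_const (p := ζ)
    (Or.inl (ne_of_gt (div_pos ht hc)))).comp t h1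
  exact h2.congr_deriv (by ring)

/-- concavity of the value function at the optimal barrier:
`∂²G/∂x₁²(x₁,x₂;β₀*) ≤ 0` on the continuation region `α₀ ≤ x₁/x₂ ≤ β₀*`. -/
theorem stmt_9 (μA μL δ σA σL ρ ζ₁ ζ₂ α₀ β₀ : ℝ)
    (hσA : 0 < σA) (hσL : 0 < σL) (hρ₁ : -1 < ρ) (hρ₂ : ρ < 1)
    (hμ : μL < μA) (hδ : μA < δ)
    (hroot₁ : (1 / 2) * (σA ^ 2 + σL ^ 2 - 2 * ρ * σA * σL) * ζ₁ * (ζ₁ - 1)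
      + (μA - μL) * ζ₁ + (μL - δ) = 0)
    (hroot₂ : (1 / 2) * (σA ^ 2 + σL ^ 2 - 2 * ρ * σA * σL) * ζ₂ * (ζ₂ - 1)
      + (μA - μL) * ζ₂ + (μL - δ) = 0)
    (hζlt : ζ₁ < ζ₂) (hζ₁ : ζ₁ < 0) (hζ₂ : 1 < ζ₂)
    (hα₀ : 0 < α₀)
    (hβ₀ : β₀ = α₀ * (ζ₁ * (ζ₁ - 1) / (ζ₂ * (ζ₂ - 1))) ^ (1 / (ζ₂ - ζ₁))) :
    ∀ x₁ x₂ : ℝ, 0 < x₁ → 0 < x₂ → α₀ ≤ x₁ / x₂ → x₁ / x₂ ≤ β₀ →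
      deriv (deriv (fun t => Gb α₀ ζ₁ ζ₂ β₀ t x₂)) x₁ ≤ 0 := by
  intro x₁ x₂ hx₁ hx₂ hlo hhi
  set c : ℝ := α₀ * x₂ with hcdef
  have hc : 0 < c := mul_pos hα₀ hx₂
  set D : ℝ := ζ₁ * (β₀ / α₀) ^ (ζ₁ - 1) - ζ₂ * (β₀ / α₀) ^ (ζ₂ - 1) with hDdef
  -- basic positivity facts
  have hz1 : 0 < ζ₁ * (ζ₁ - 1) := by nlinarith
  have hz2 : 0 < ζ₂ * (ζ₂ - 1) := by nlinarith
  have hR : 0 < ζ₁ * (ζ₁ - 1) / (ζ₂ * (ζ₂ - 1)) := div_pos hz1 hz2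
  have he : 0 < ζ₂ - ζ₁ := by linarith
  have hβpos : 0 < β₀ := by
    rw [hβ₀]; exact mul_pos hα₀ (Real.rpow_pos_of_pos hR _)
  have hba : 0 < β₀ / α₀ := div_pos hβpos hα₀
  have hD : D < 0 := by
    have h1 : ζ₁ * (β₀ / α₀) ^ (ζ₁ - 1) < 0 :=
      mul_neg_of_neg_of_pos hζ₁ (Real.rpow_pos_of_pos hba _)
    have h2 : 0 < ζ₂ * (β₀ / α₀) ^ (ζ₂ - 1) :=
      mul_pos (by linarith) (Real.rpow_pos_of_pos hba _)
    rw [hDdef]; linarith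
  -- first derivative on Ioi 0
  have hf : ∀ t ∈ Ioi (0:ℝ), HasDerivAt (fun t => Gb α₀ ζ₁ ζ₂ β₀ t x₂)
      ((ζ₁ * (t / c) ^ (ζ₁ - 1) - ζ₂ * (t / c) ^ (ζ₂ - 1)) / D) t := by
    intro t ht
    have h := ((((rpow_div_hasDeriv hc ζ₁ ht).sub
      (rpow_div_hasDeriv hc ζ₂ ht)).const_mul c).div_const D)
    have heq : (fun t => Gb α₀ ζ₁ ζ₂ β₀ t x₂)
        = fun t => c * ((t / c) ^ ζ₁ - (t / c) ^ ζ₂) / D := by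
      funext t; simp [Gb, hcdef, hDdef]
    rw [heq]
    have hc' : c ≠ 0 := hc.ne'
    exact h.congr_deriv (by field_simp)
  have hg : deriv (fun t => Gb α₀ ζ₁ ζ₂ β₀ t x₂)
      =ᶠ[nhds x₁] fun t => (ζ₁ * (t / c) ^ (ζ₁ - 1) - ζ₂ * (t / c) ^ (ζ₂ - 1)) / D :=
    Filter.eventuallyEq_of_mem (Ioi_mem_nhds hx₁) (fun t ht => (hf t ht).deriv)
  rw [hg.deriv_eq]
  -- second derivative
  have h2 : HasDerivAt
      (fun t => (ζ₁ * (t / c) ^ (ζ₁ - 1) - ζ₂ * (t / c) ^ (ζ₂ - 1)) / D)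
      ((ζ₁ * ((ζ₁ - 1) * (x₁ / c) ^ (ζ₁ - 2) / c)
        - ζ₂ * ((ζ₂ - 1) * (x₁ / c) ^ (ζ₂ - 2) / c)) / D) x₁ := by
    have h := ((((rpow_div_hasDeriv hc (ζ₁ - 1) hx₁).const_mul ζ₁).sub
      ((rpow_div_hasDeriv hc (ζ₂ - 1) hx₁).const_mul ζ₂)).div_const D)
    have e1 : ζ₁ - 1 - 1 = ζ₁ - 2 := by ring
    have e2 : ζ₂ - 1 - 1 = ζ₂ - 2 := by ring
    rw [e1, e2] at h
    exact h
  rw [h2.deriv]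
  -- sign analysis
  set u : ℝ := x₁ / c with hudef
  have hu : 0 < u := div_pos hx₁ hc
  -- u ≤ β₀/α₀
  have hub : u ≤ β₀ / α₀ := by
    have : u = (x₁ / x₂) / α₀ := by
      rw [hudef, hcdef, div_div, mul_comm α₀ x₂]
    rw [this]
    gcongr
  have hba_eq : β₀ / α₀ = (ζ₁ * (ζ₁ - 1) / (ζ₂ * (ζ₂ - 1))) ^ (1 / (ζ₂ - ζ₁)) := by
    rw [hβ₀]; field_simp
  -- u^(ζ₂-ζ₁) ≤ R
  have hkey : u ^ (ζ₂ - ζ₁) ≤ ζ₁ * (ζ₁ - 1) / (ζ₂ * (ζ₂ - 1)) := by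
    have h1 : u ^ (ζ₂ - ζ₁) ≤ (β₀ / α₀) ^ (ζ₂ - ζ₁) :=
      Real.rpow_le_rpow hu.le hub he.le
    have h2 : (β₀ / α₀) ^ (ζ₂ - ζ₁) = ζ₁ * (ζ₁ - 1) / (ζ₂ * (ζ₂ - 1)) := by
      rw [hba_eq, ← Real.rpow_mul hR.le, one_div,
        inv_mul_cancel₀ (ne_of_gt he), Real.rpow_one]
    rw [h2] at h1; exact h1
  -- the main pointwise inequality
  have hmain : ζ₂ * (ζ₂ - 1) * u ^ (ζ₂ - 2) ≤ ζ₁ * (ζ₁ - 1) * u ^ (ζ₁ - 2) := by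
    have hsplit : u ^ (ζ₂ - 2) = u ^ (ζ₁ - 2) * u ^ (ζ₂ - ζ₁) := by
      rw [← Real.rpow_add hu]; congr 1; ring
    rw [hsplit]
    have h3 : ζ₂ * (ζ₂ - 1) * u ^ (ζ₂ - ζ₁) ≤ ζ₁ * (ζ₁ - 1) := by
      have := mul_le_mul_of_nonneg_left hkey hz2.le
      rw [mul_div_cancel₀ _ (ne_of_gt hz2)] at this
      linarith
    have hp : 0 < u ^ (ζ₁ - 2) := Real.rpow_pos_of_pos hu _
    have h4 := mul_le_mul_of_nonneg_right h3 hp.le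
    calc ζ₂ * (ζ₂ - 1) * (u ^ (ζ₁ - 2) * u ^ (ζ₂ - ζ₁))
        = ζ₂ * (ζ₂ - 1) * u ^ (ζ₂ - ζ₁) * u ^ (ζ₁ - 2) := by ring
      _ ≤ ζ₁ * (ζ₁ - 1) * u ^ (ζ₁ - 2) := h4
  have hN : 0 ≤ ζ₁ * ((ζ₁ - 1) * u ^ (ζ₁ - 2) / c)
      - ζ₂ * ((ζ₂ - 1) * u ^ (ζ₂ - 2) / c) := by
    have : ζ₂ * (ζ₂ - 1) * u ^ (ζ₂ - 2) / c ≤ ζ₁ * (ζ₁ - 1) * u ^ (ζ₁ - 2) / c := by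
      gcongr
    have e : ∀ a b p : ℝ, a * (b * p / c) = a * b * p / c := by
      intro a b p; ring
    rw [e, e]; linarith
  exact div_nonpos_of_nonneg_of_nonpos hN hD.le
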